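/- Let Q ∈ SO(2) be a rotation of ℝ², let d : ℝ² → ℝ³ be continuously differentiable, and let β : ℝ² → ℝ be a twice continuously differentiable function with compact support. Then ∫_{ℝ²} (∇d ⊙ ∇d)(x) : ∇∇⊥β(x) dx = ∫_{ℝ²} (∇d_Q ⊙ ∇d_Q)(y) : ∇∇⊥β_Q(y) dy, where d_Q(y) = d(Qy), β_Q(y) = β(Qy), ∇⊥β = (−∂₂β, ∂₁β), ∇∇⊥β is the 2×2 matrix of partial derivatives of ∇⊥β, and A : B = Σ_{i,j} A_{ij}B_{ij}. -/

import Mathlib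

open MeasureTheory Real Filter Topology

noncomputable section

abbrev E2 : Type := EuclideanSpace ℝ (Fin 2)
abbrev E3 : Type := EuclideanSpace ℝ (Fin 3)

/-- The `i`-th standard basis vector of `ℝ²`. -/
def ee (i : Fin 2) : E2 := EuclideanSpace.single i 1

/-- Partial derivative `∂ᵢ f` of a map on `ℝ²`. -/
def pd {F : Type} [NormedAddCommGroup F] [NormedSpace ℝ F]
    (i : Fin 2) (f : E2 → F) (x : E2) : F := fderiv ℝ f x (ee i)

/-- The action of a `2 × 2` matrix on `ℝ²`. -/
def matAct (Q : Matrix (Fin 2) (Fin 2) ℝ) (x : E2) : E2 :=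
  (EuclideanSpace.equiv (Fin 2) ℝ).symm (Q.mulVec (fun i => x i))

/-- The integrand `(∇d ⊙ ∇d) : ∇∇⊥β`, where `∇⊥β = (−∂₂β, ∂₁β)`. -/
def stressTested (d : E2 → E3) (β : E2 → ℝ) (x : E2) : ℝ :=
  ∑ i : Fin 2, ∑ j : Fin 2,
    (inner ℝ (pd i d x) (pd j d x) : ℝ) * pd i (fun y => ![-pd 1 β y, pd 0 β y] j) x

/- Auxiliary lemmas -/

lemma matAct_apply (Q : Matrix (Fin 2) (Fin 2) ℝ) (x : E2) (i : Fin 2) :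
    matAct Q x i = Q i 0 * x 0 + Q i 1 * x 1 := by
  fin_cases i <;> simp [matAct, Matrix.mulVec, dotProduct, Fin.sum_univ_two]

/-- The linear map associated to `matAct Q`. -/
def rotLin (Q : Matrix (Fin 2) (Fin 2) ℝ) : E2 →ₗ[ℝ] E2 where
  toFun := matAct Q
  map_add' x y := by
    ext i; simp [matAct_apply]; ring
  map_smul' c x := by
    ext i; simp [matAct_apply]; ring

/-- `pd` of a negation. -/
lemma pd_neg (f : E2 → ℝ) (i : Fin 2) (x : E2) :
    pd i (fun y => -f y) x = -pd i f x := by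
  simp [pd, fderiv_neg]

/-- `pd` of a linear combination. -/
lemma pd_comb (g h : E2 → ℝ) (hg : DifferentiableAt ℝ g x) (hh : DifferentiableAt ℝ h x)
    (c₁ c₂ : ℝ) (i : Fin 2) :
    pd i (fun y => c₁ * g y + c₂ * h y) x = c₁ * pd i g x + c₂ * pd i h x := by
  have : fderiv ℝ (fun y => c₁ * g y + c₂ * h y) x
      = c₁ • fderiv ℝ g x + c₂ • fderiv ℝ h x := by
    rw [fderiv_fun_add ((hg.const_mul c₁)) ((hh.const_mul c₂))]
    rw [fderiv_const_mul hg, fderiv_const_mul hh]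
  simp [pd, this]

/-- First partial derivatives of a `C²` function are `C¹`. -/
lemma contDiff_pd (β : E2 → ℝ) (hβ : ContDiff ℝ 2 β) (m : Fin 2) :
    ContDiff ℝ 1 (pd m β) := by
  have h : ContDiff ℝ 1 (fderiv ℝ β) := hβ.fderiv_right (by norm_num)
  exact h.clm_apply contDiff_const

/-- **Rotational covariance of the tested Ericksen stress (identity (3.6)).** For a rotation
`Q ∈ SO(2)`, a `C¹` map `d : ℝ² → ℝ³` and a compactly supported `C²` function `β`,
`∫ (∇d ⊙ ∇d) : ∇∇⊥β dx = ∫ (∇d_Q ⊙ ∇d_Q) : ∇∇⊥β_Q dy` where `d_Q(y) = d(Qy)`,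
`β_Q(y) = β(Qy)`. -/
theorem rotation_covariance
    (Q : Matrix (Fin 2) (Fin 2) ℝ) (hQ : Q.transpose * Q = 1) (hdet : Q.det = 1)
    (d : E2 → E3) (hd : ContDiff ℝ 1 d)
    (β : E2 → ℝ) (hβ : ContDiff ℝ 2 β) (hsupp : HasCompactSupport β) :
    ∫ x, stressTested d β x = ∫ y, stressTested (fun w => d (matAct Q w)) (fun w => β (matAct Q w)) y := by
  classical
  -- entry relations
  have hent : ∀ i j, (Q.transpose * Q) i j = (1 : Matrix (Fin 2) (Fin 2) ℝ) i j := by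
    intro i j; rw [hQ]
  have h00 : Q 0 0 * Q 0 0 + Q 1 0 * Q 1 0 = 1 := by
    have := hent 0 0; simpa [Matrix.mul_apply, Matrix.transpose_apply, Fin.sum_univ_two,
      Matrix.one_apply] using this
  have h01 : Q 0 0 * Q 0 1 + Q 1 0 * Q 1 1 = 0 := by
    have := hent 0 1; simpa [Matrix.mul_apply, Matrix.transpose_apply, Fin.sum_univ_two,
      Matrix.one_apply] using this
  have h11 : Q 0 1 * Q 0 1 + Q 1 1 * Q 1 1 = 1 := by
    have := hent 1 1; simpa [Matrix.mul_apply, Matrix.transpose_apply, Fin.sum_univ_two,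
      Matrix.one_apply] using this
  have hdet' : Q 0 0 * Q 1 1 - Q 0 1 * Q 1 0 = 1 := by
    have := hdet; rw [Matrix.det_fin_two] at this; linarith
  -- the rotation entries
  have hQ11 : Q 1 1 = Q 0 0 := by
    linear_combination (-(Q 1 1)) * h00 + Q 0 0 * hdet' + Q 1 0 * h01
  have hQ01 : Q 0 1 = -Q 1 0 := by
    linear_combination (-(Q 0 1)) * h00 + Q 0 0 * h01 + (-(Q 1 0)) * hdet'
  set a := Q 0 0 with ha
  set c := Q 1 0 with hc
  have hac : a ^ 2 + c ^ 2 = 1 := by linear_combination h00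
  -- the isometry
  have hinner : ∀ x y : E2, (inner ℝ (rotLin Q x) (rotLin Q y) : ℝ) = inner ℝ x y := by
    intro x y
    simp only [PiLp.inner_apply, RCLike.inner_apply, conj_trivial, Fin.sum_univ_two]
    show matAct Q y 0 * matAct Q x 0 + matAct Q y 1 * matAct Q x 1 = _
    simp only [matAct_apply, hQ11, hQ01, ← ha, ← hc]
    linear_combination (y 0 * x 0 + y 1 * x 1) * h00
  set T : E2 ≃ₗᵢ[ℝ] E2 :=
    ((rotLin Q).isometryOfInner hinner).toLinearIsometryEquiv rfl with hT
  have hTapp : ∀ x : E2, T x = matAct Q x := fun x => rfl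
  -- T on basis vectors
  have hTee : ∀ i : Fin 2, T (ee i) = Q 0 i • ee 0 + Q 1 i • ee 1 := by
    intro i
    ext k
    rw [hTapp]
    fin_cases i <;> fin_cases k <;>
      simp [matAct_apply, ee, EuclideanSpace.single_apply]
  -- chain rule for pd
  have pd_comp : ∀ {F : Type} [NormedAddCommGroup F] [NormedSpace ℝ F]
      (f : E2 → F) (_ : Differentiable ℝ f) (i : Fin 2) (y : E2),
      pd i (fun w => f (T w)) y = Q 0 i • pd 0 f (T y) + Q 1 i • pd 1 f (T y) := by
    intro F _ _ f hf i y
    have hdiffT : DifferentiableAt ℝ (⇑T) y := T.differentiable.differentiableAt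
    have hcomp : fderiv ℝ (fun w => f (T w)) y
        = (fderiv ℝ f (T y)).comp (fderiv ℝ (⇑T) y) :=
      fderiv_comp y (hf (T y)) hdiffT
    have hfd : fderiv ℝ (⇑T) y (ee i) = T (ee i) := by
      rw [T.fderiv]; rfl
    rw [pd, hcomp]
    simp only [ContinuousLinearMap.comp_apply, hfd, hTee i]
    rw [(fderiv ℝ f (T y)).map_add, (fderiv ℝ f (T y)).map_smul, (fderiv ℝ f (T y)).map_smul]
    rfl
  -- differentiability facts
  have hdd : Differentiable ℝ d := hd.differentiable one_ne_zero
  have hb : ∀ m : Fin 2, Differentiable ℝ (pd m β) :=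
    fun m => (contDiff_pd β hβ m).differentiable one_ne_zero
  have hβd : Differentiable ℝ β := hβ.differentiable (by norm_num)
  -- pointwise identity
  have key : ∀ y : E2, stressTested (fun w => d (T w)) (fun w => β (T w)) y
      = stressTested d β (T y) := by
    intro y
    have hbT : ∀ m, pd m (fun w => β (T w))
        = fun z => Q 0 m * pd 0 β (T z) + Q 1 m * pd 1 β (T z) := by
      intro m; funext z
      simpa [smul_eq_mul] using pd_comp β hβd m z
    have hbTdiff : ∀ m, DifferentiableAt ℝ (fun z => pd m β (T z)) y :=
      fun m => ((hb m) (T y)).comp y T.differentiable.differentiableAt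
    -- second derivatives
    have hpd2 : ∀ (m i : Fin 2), pd i (fun z => pd m β (T z)) y
        = Q 0 i * pd 0 (pd m β) (T y) + Q 1 i * pd 1 (pd m β) (T y) := by
      intro m i
      simpa [smul_eq_mul] using pd_comp (pd m β) (hb m) i y
    simp only [stressTested, Fin.sum_univ_two, Matrix.cons_val_zero, Matrix.cons_val_one,
      Matrix.head_cons]
    -- rewrite the β-part on the LHS
    have e0 : ∀ i : Fin 2, pd i (fun z => -pd 1 (fun w => β (T w)) z) y
        = -(Q 0 1 * (Q 0 i * pd 0 (pd 0 β) (T y) + Q 1 i * pd 1 (pd 0 β) (T y))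
            + Q 1 1 * (Q 0 i * pd 0 (pd 1 β) (T y) + Q 1 i * pd 1 (pd 1 β) (T y))) := by
      intro i
      rw [pd_neg, hbT 1, pd_comb _ _ (hbTdiff 0) (hbTdiff 1), hpd2 0 i, hpd2 1 i]
    have e1 : ∀ i : Fin 2, pd i (fun z => pd 0 (fun w => β (T w)) z) y
        = Q 0 0 * (Q 0 i * pd 0 (pd 0 β) (T y) + Q 1 i * pd 1 (pd 0 β) (T y))
            + Q 1 0 * (Q 0 i * pd 0 (pd 1 β) (T y) + Q 1 i * pd 1 (pd 1 β) (T y)) := by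
      intro i
      rw [hbT 0, pd_comb _ _ (hbTdiff 0) (hbTdiff 1), hpd2 0 i, hpd2 1 i]
    -- rewrite the d-part on the LHS
    have ed : ∀ (i j : Fin 2),
        (inner ℝ (pd i (fun w => d (T w)) y) (pd j (fun w => d (T w)) y) : ℝ)
        = Q 0 i * Q 0 j * inner ℝ (pd 0 d (T y)) (pd 0 d (T y))
          + Q 0 i * Q 1 j * inner ℝ (pd 0 d (T y)) (pd 1 d (T y))
          + Q 1 i * Q 0 j * inner ℝ (pd 1 d (T y)) (pd 0 d (T y))
          + Q 1 i * Q 1 j * inner ℝ (pd 1 d (T y)) (pd 1 d (T y)) := by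
      intro i j
      rw [pd_comp d hdd i y, pd_comp d hdd j y]
      simp only [inner_add_left, inner_add_right, real_inner_smul_left, real_inner_smul_right]
      ring
    rw [e0 0, e0 1, e1 0, e1 1, ed 0 0, ed 0 1, ed 1 0, ed 1 1]
    -- on the RHS, the inner β-functions simplify
    have r0 : (fun z => -pd 1 β z) = fun z => (-1 : ℝ) * pd 1 β z + 0 * pd 0 β z := by
      funext z; ring
    set G00 : ℝ := inner ℝ (pd 0 d (T y)) (pd 0 d (T y)) with hG00
    set G01 : ℝ := inner ℝ (pd 0 d (T y)) (pd 1 d (T y)) with hG01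
    set G10 : ℝ := inner ℝ (pd 1 d (T y)) (pd 0 d (T y)) with hG10
    set G11 : ℝ := inner ℝ (pd 1 d (T y)) (pd 1 d (T y)) with hG11
    set H00 : ℝ := pd 0 (pd 0 β) (T y) with hH00
    set H01 : ℝ := pd 0 (pd 1 β) (T y) with hH01
    set H10 : ℝ := pd 1 (pd 0 β) (T y) with hH10
    set H11 : ℝ := pd 1 (pd 1 β) (T y) with hH11
    have rhs0 : ∀ i : Fin 2, pd i (fun z => -pd 1 β z) (T y)
        = -(if i = 0 then H01 else H11) := by
      intro i
      rw [pd_neg]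
      fin_cases i <;> simp [hH01, hH11]
    rw [rhs0 0, rhs0 1]
    norm_num
    rw [hQ11, hQ01, ← ha, ← hc]
    linear_combination ((1 + a^2 + c^2) * (G01*H00 - G00*H01 + G11*H10 - G10*H11)) * hac
  -- change of variables
  calc ∫ x, stressTested d β x
      = ∫ y, stressTested d β (T y) := (MeasureTheory.integral_comp T (stressTested d β)).symm
    _ = ∫ y, stressTested (fun w => d (matAct Q w)) (fun w => β (matAct Q w)) y := by
        congr 1; funext y
        rw [← key y]
        simp only [hTapp]
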